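/- Let Y : ℝⁿ → ℝᵐ be a non-constant polynomial map. Then the set S_Y is closed in ℝᵐ, and for every point q ∈ S_Y there exists a non-constant polynomial map φ : ℝ → ℝᵐ such that φ(ℝ) ⊆ S_Y and q ∈ φ(ℝ). -/

import Mathlib

open Filter Topology Metric Bornology Polynomial Set

/-- The set of points at which a continuous map is not proper: `y` belongs to this set
iff there is no neighborhood `U` of `y` such that `Y ⁻¹' (closure U)` is compact. -/
def nonProperSet {M N : Type*} [TopologicalSpace M] [TopologicalSpace N] (Y : M → N) : Set N :=
  {y | ¬ ∃ U ∈ nhds y, IsCompact (Y ⁻¹' closure U)}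

noncomputable def lineQ {n : ℕ} (p : MvPolynomial (Fin n) ℝ) (x w : Fin n → ℝ) : Polynomial ℝ :=
  MvPolynomial.aeval (fun j => Polynomial.C (x j) + Polynomial.C (w j) * Polynomial.X) p

lemma lineQ_natDegree_le {n : ℕ} (p : MvPolynomial (Fin n) ℝ) (x w : Fin n → ℝ) :
    (lineQ p x w).natDegree ≤ p.totalDegree := by
  rw [lineQ]
  conv_lhs => rw [p.as_sum]
  rw [map_sum]
  refine Polynomial.natDegree_sum_le_of_forall_le _ _ ?_
  intro s hs
  rw [MvPolynomial.aeval_monomial]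
  refine (Polynomial.natDegree_mul_le).trans ?_
  have h1 : (algebraMap ℝ (Polynomial ℝ) (MvPolynomial.coeff s p)).natDegree = 0 := by
    simp [Polynomial.algebraMap_eq]
  rw [h1, zero_add]
  refine (Polynomial.natDegree_prod_le _ _).trans ?_
  have hterm : ∀ j, ((Polynomial.C (x j) + Polynomial.C (w j) * Polynomial.X) ^ s j).natDegree ≤ s j := by
    intro j
    refine Polynomial.natDegree_pow_le.trans ?_
    have h2 : (Polynomial.C (x j) + Polynomial.C (w j) * Polynomial.X).natDegree ≤ 1 := by
      refine (Polynomial.natDegree_add_le _ _).trans ?_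
      simp only [Polynomial.natDegree_C, max_le_iff]
      exact ⟨Nat.zero_le _, (Polynomial.natDegree_C_mul_le _ _).trans Polynomial.natDegree_X_le⟩
    calc s j * _ ≤ s j * 1 := Nat.mul_le_mul_left _ h2
      _ = s j := Nat.mul_one _
  refine le_trans (Finset.sum_le_sum (g := fun j => s j) (fun j _ => hterm j)) ?_
  exact MvPolynomial.le_totalDegree hs

lemma lineQ_eval {n : ℕ} (p : MvPolynomial (Fin n) ℝ) (x w : Fin n → ℝ) (t : ℝ) :
    (lineQ p x w).eval t = MvPolynomial.eval (fun j => x j + w j * t) p := by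
  have h := MvPolynomial.comp_aeval
    (f := fun j : Fin n => Polynomial.C (x j) + Polynomial.C (w j) * Polynomial.X)
    (φ := Polynomial.aeval t (R := ℝ))
  have h2 := congrArg (fun (ψ : MvPolynomial (Fin n) ℝ →ₐ[ℝ] ℝ) => ψ p) h
  simp only [AlgHom.comp_apply] at h2
  rw [lineQ, ← Polynomial.coe_aeval_eq_eval, h2]
  simp only [map_add, map_mul, Polynomial.aeval_C, Polynomial.aeval_X,
    Algebra.algebraMap_self_apply]
  rw [← MvPolynomial.coe_aeval_eq_eval]
  rfl

variable {n m : ℕ}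

lemma aux_mem_nonProperSet {Y : (Fin n → ℝ) → (Fin m → ℝ)} {p : Fin m → ℝ}
    (x : ℕ → (Fin n → ℝ)) (hx : Tendsto (fun k => ‖x k‖) atTop atTop)
    (hy : Tendsto (fun k => Y (x k)) atTop (𝓝 p)) : p ∈ nonProperSet Y := by
  rintro ⟨U, hU, hK⟩
  obtain ⟨R, hR⟩ := hK.isBounded.exists_norm_le
  have h1 : ∀ᶠ k in atTop, Y (x k) ∈ U := hy.eventually_mem hU
  have h2 : ∀ᶠ k in atTop, R < ‖x k‖ := hx.eventually_gt_atTop R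
  obtain ⟨k, hk1, hk2⟩ := (h1.and h2).exists
  exact absurd (hR _ (by exact subset_closure hk1)) (not_le.2 hk2)

lemma aux_seq_of_mem {Y : (Fin n → ℝ) → (Fin m → ℝ)} (hc : Continuous Y) {q : Fin m → ℝ}
    (hq : q ∈ nonProperSet Y) :
    ∃ x : ℕ → (Fin n → ℝ), Tendsto (fun k => ‖x k‖) atTop atTop ∧
      Tendsto (fun k => Y (x k)) atTop (𝓝 q) := by
  have h : ∀ k : ℕ, ∃ z, (k : ℝ) < ‖z‖ ∧ dist (Y z) q ≤ 1 / (k + 1) := by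
    intro k
    have hU : Metric.closedBall q (1 / (k + 1)) ∈ 𝓝 q :=
      Metric.closedBall_mem_nhds _ (by positivity)
    have hnc : ¬ IsCompact (Y ⁻¹' closure (Metric.closedBall q (1 / (k + 1)))) :=
      fun h => hq ⟨_, hU, h⟩
    rw [Metric.isClosed_closedBall.closure_eq] at hnc
    have hcl : IsClosed (Y ⁻¹' Metric.closedBall q (1 / (k + 1))) :=
      Metric.isClosed_closedBall.preimage hc
    have hb : ¬ IsBounded (Y ⁻¹' Metric.closedBall q (1 / (k + 1))) :=
      fun hb => hnc (Metric.isCompact_iff_isClosed_bounded.2 ⟨hcl, hb⟩)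
    rw [isBounded_iff_forall_norm_le] at hb
    push_neg at hb
    obtain ⟨z, hz1, hz2⟩ := hb k
    exact ⟨z, by simpa using hz2, by simpa [Metric.mem_closedBall] using hz1⟩
  choose x hx1 hx2 using h
  refine ⟨x, ?_, ?_⟩
  · exact tendsto_atTop_mono (fun k => (hx1 k).le) tendsto_natCast_atTop_atTop
  · exact tendsto_iff_dist_tendsto_zero.2
      (squeeze_zero (fun _ => dist_nonneg) hx2 tendsto_one_div_add_atTop_nhds_zero_nat)

lemma aux_isClosed {Y : (Fin n → ℝ) → (Fin m → ℝ)} (hc : Continuous Y) :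
    IsClosed (nonProperSet Y) := by
  rw [← isOpen_compl_iff, isOpen_iff_mem_nhds]
  intro p hp
  simp only [Set.mem_compl_iff, nonProperSet, Set.mem_setOf_eq, not_not] at hp
  obtain ⟨U, hU, hK⟩ := hp
  have hint : interior U ∈ 𝓝 p := interior_mem_nhds.2 hU
  filter_upwards [hint] with p' hp'
  intro hp''
  exact hp'' ⟨interior U, isOpen_interior.mem_nhds hp',
    hK.of_isClosed_subset (isClosed_closure.preimage hc)
      (Set.preimage_mono (closure_mono interior_subset))⟩

set_option maxHeartbeats 1000000 in
theorem stmt8 {n m : ℕ} (Y : (Fin n → ℝ) → (Fin m → ℝ))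
    (P : Fin m → MvPolynomial (Fin n) ℝ)
    (hpoly : ∀ x i, Y x i = MvPolynomial.eval x (P i))
    (hnonconst : ¬ ∃ c : Fin m → ℝ, ∀ x, Y x = c) :
    IsClosed (nonProperSet Y) ∧
      ∀ q ∈ nonProperSet Y, ∃ φ : ℝ → (Fin m → ℝ),
        (∃ ps : Fin m → Polynomial ℝ, ∀ t i, φ t i = (ps i).eval t) ∧
        (¬ ∃ c : Fin m → ℝ, ∀ t, φ t = c) ∧
        Set.range φ ⊆ nonProperSet Y ∧ q ∈ Set.range φ := by
  have hc : Continuous Y := by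
    have hYeq : Y = fun x i => MvPolynomial.eval x (P i) := by
      funext x i; exact hpoly x i
    rw [hYeq]
    exact continuous_pi fun i => MvPolynomial.continuous_eval _
  refine ⟨aux_isClosed hc, ?_⟩
  intro q hq
  obtain ⟨x, hxnorm, hxq⟩ := aux_seq_of_mem hc hq
  set D : ℕ := (Finset.univ.sup fun i => (P i).totalDegree) + 1 with hDdef
  -- choose directions
  have hwex : ∀ k : ℕ, ∃ w : Fin n → ℝ, Y (x k + w) ≠ Y (x k) := by
    intro k
    push_neg at hnonconst
    obtain ⟨z, hz⟩ := hnonconst (Y (x k))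
    exact ⟨z - x k, by simpa using hz⟩
  choose w hwk using hwex
  -- coefficients of line restrictions
  set Cf : ℕ → ℕ → (Fin m → ℝ) := fun k j i => ((lineQ (P i) (x k) (w k)).coeff j) with hCf
  have hdeg : ∀ k i, (lineQ (P i) (x k) (w k)).natDegree < D + 1 := by
    intro k i
    have h1 : (P i).totalDegree ≤ Finset.univ.sup (fun i => (P i).totalDegree) :=
      Finset.le_sup (f := fun i => (P i).totalDegree) (Finset.mem_univ i)
    have := lineQ_natDegree_le (P i) (x k) (w k)
    omega
  have hexp : ∀ k (t : ℝ) i, Y (fun j => x k j + w k j * t) i =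
      ∑ j ∈ Finset.range (D + 1), Cf k j i * t ^ j := by
    intro k t i
    rw [hpoly, ← lineQ_eval, Polynomial.eval_eq_sum_range' (hdeg k i)]
  -- nonvanishing of some coefficient of degree between 1 and D
  have hCnz : ∀ k, ∃ j0, (1 ≤ j0 ∧ j0 ≤ D) ∧ Cf k j0 ≠ 0 := by
    intro k
    by_contra hcon
    push_neg at hcon
    apply hwk k
    have hkey : ∀ (t : ℝ), Y (fun j => x k j + w k j * t) = fun i => Cf k 0 i := by
      intro t
      funext i
      rw [hexp k t i]
      rw [Finset.sum_eq_single 0]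
      · simp
      · intro j hj hj0
        have hj1 : 1 ≤ j ∧ j ≤ D := by
          simp only [Finset.mem_range] at hj; omega
        rw [congrFun (hcon j hj1) i]
        simp
      · intro h; simp at h
    have h1 : Y (x k + w k) = Y (x k) := by
      have e1 : x k + w k = fun j => x k j + w k j * (1 : ℝ) := by funext j; simp
      have e0 : x k = fun j => x k j + w k j * (0 : ℝ) := by funext j; simp
      rw [e1, hkey 1, e0, hkey 0]
    exact h1
  -- normalization: pick s k with norm of coefficient tuple equal to 1
  have hD1 : 1 ≤ D := Nat.le_add_left 1 _
  have hM : ∀ k, ∃ s : ℝ, 0 < s ∧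
      ‖(fun jd : Fin D => s ^ ((jd : ℕ) + 1) • Cf k ((jd : ℕ) + 1))‖ = 1 := by
    intro k
    obtain ⟨j0, ⟨hj1, hj2⟩, hj0⟩ := hCnz k
    set M : ℝ → ℝ := fun σ => ‖(fun jd : Fin D => σ ^ ((jd : ℕ) + 1) • Cf k ((jd : ℕ) + 1))‖
      with hMdef
    have hMcont : Continuous M := by
      refine Continuous.norm ?_
      exact continuous_pi fun jd => (continuous_pow _).smul continuous_const
    have hM0 : M 0 = 0 := by
      rw [hMdef]
      simp
    have hCpos : 0 < ‖Cf k j0‖ := norm_pos_iff.2 hj0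
    set b : ℝ := max 1 (1 / ‖Cf k j0‖) with hbdef
    have hb1 : (1:ℝ) ≤ b := le_max_left _ _
    have hbpos : (0:ℝ) < b := lt_of_lt_of_le zero_lt_one hb1
    have hbC : 1 ≤ b * ‖Cf k j0‖ := by
      have h1 : 1 / ‖Cf k j0‖ ≤ b := le_max_right _ _
      rw [div_le_iff₀ hCpos] at h1
      linarith
    have hMb : 1 ≤ M b := by
      have hjd : j0 - 1 < D := by omega
      set jd : Fin D := ⟨j0 - 1, hjd⟩ with hjddef
      have h1 : ‖(fun jd : Fin D => b ^ ((jd : ℕ) + 1) • Cf k ((jd : ℕ) + 1)) jd‖ ≤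
          ‖(fun jd : Fin D => b ^ ((jd : ℕ) + 1) • Cf k ((jd : ℕ) + 1))‖ :=
        norm_le_pi_norm (fun jd : Fin D => b ^ ((jd : ℕ) + 1) • Cf k ((jd : ℕ) + 1)) jd
      have hMbe : M b = ‖(fun jd : Fin D => b ^ ((jd : ℕ) + 1) • Cf k ((jd : ℕ) + 1))‖ := rfl
      rw [← hMbe] at h1
      have hj0e : (jd : ℕ) + 1 = j0 := by simp [hjddef]; omega
      simp only [hj0e] at h1
      have h2 : ‖b ^ j0 • Cf k j0‖ = b ^ j0 * ‖Cf k j0‖ := by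
        rw [norm_smul, Real.norm_eq_abs, abs_of_pos (by positivity)]
      have h3 : b ≤ b ^ j0 := le_self_pow₀ hb1 (by omega)
      rw [h2] at h1
      nlinarith
    have hIVT := intermediate_value_Icc (le_of_lt hbpos) hMcont.continuousOn
    have h1 : (1:ℝ) ∈ Set.Icc (M 0) (M b) := by rw [hM0]; exact ⟨zero_le_one, hMb⟩
    obtain ⟨σ, hσ, hMs⟩ := hIVT h1
    refine ⟨σ, ?_, hMs⟩
    rcases lt_or_eq_of_le hσ.1 with h | h
    · exact h
    · exfalso
      rw [← h, hM0] at hMs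
      norm_num at hMs
  choose s hspos hsnorm using hM
  -- main data
  set v : ℕ → (Fin n → ℝ) := fun k => s k • w k with hv
  have hvne : ∀ k, v k ≠ 0 := by
    intro k
    have hwne : w k ≠ 0 := by
      intro h0
      apply hwk k
      rw [h0, add_zero]
    exact smul_ne_zero (ne_of_gt (hspos k)) hwne
  set N : ℕ → ℝ := fun k => ‖x k‖ + ‖v k‖ with hN
  have hNpos : ∀ k, 0 < N k := fun k =>
    add_pos_of_nonneg_of_pos (norm_nonneg _) (norm_pos_iff.2 (hvne k))
  set zh : ℕ → (Fin n → ℝ) := fun k => (N k)⁻¹ • x k with hzh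
  set uh : ℕ → (Fin n → ℝ) := fun k => (N k)⁻¹ • v k with huh
  set Ak : ℕ → (Fin D → (Fin m → ℝ)) := fun k jd => s k ^ ((jd : ℕ) + 1) • Cf k ((jd : ℕ) + 1)
    with hAk
  have hnormsum : ∀ k, ‖zh k‖ + ‖uh k‖ = 1 := by
    intro k
    rw [hzh, huh]
    simp only [norm_smul, Real.norm_eq_abs, abs_of_nonneg (inv_nonneg.2 (hNpos k).le)]
    rw [← mul_add, show ‖x k‖ + ‖v k‖ = N k from rfl, inv_mul_cancel₀ (hNpos k).ne']
  -- subsequence extraction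
  set T : ℕ → (Fin D → (Fin m → ℝ)) × ((Fin n → ℝ) × (Fin n → ℝ)) :=
    fun k => (Ak k, zh k, uh k) with hT
  have hTb : ∀ k, T k ∈ Metric.closedBall 0 1 := by
    intro k
    rw [mem_closedBall_zero_iff]
    rw [Prod.norm_def, Prod.norm_def]
    refine max_le (le_of_eq (hsnorm k)) (max_le ?_ ?_)
    · have := hnormsum k
      have := norm_nonneg (uh k)
      linarith
    · have := hnormsum k
      have := norm_nonneg (zh k)
      linarith
  obtain ⟨L, _, ψ, hψ, hTlim⟩ := (isCompact_closedBall (0 :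
    (Fin D → (Fin m → ℝ)) × ((Fin n → ℝ) × (Fin n → ℝ))) 1).tendsto_subseq hTb
  set A : Fin D → (Fin m → ℝ) := L.1 with hA
  set zl : Fin n → ℝ := L.2.1 with hzl
  set ul : Fin n → ℝ := L.2.2 with hul
  have hAlim : Tendsto (fun k => Ak (ψ k)) atTop (𝓝 A) :=
    (continuous_fst.tendsto L).comp hTlim
  have hzlim : Tendsto (fun k => zh (ψ k)) atTop (𝓝 zl) :=
    ((continuous_fst.comp continuous_snd).tendsto L).comp hTlim
  have hulim : Tendsto (fun k => uh (ψ k)) atTop (𝓝 ul) :=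
    ((continuous_snd.comp continuous_snd).tendsto L).comp hTlim
  have hAnorm : ‖A‖ = 1 := by
    have h1 : Tendsto (fun k => ‖Ak (ψ k)‖) atTop (𝓝 ‖A‖) := hAlim.norm
    have h2 : (fun k => ‖Ak (ψ k)‖) = fun _ => (1 : ℝ) := funext fun k => hsnorm (ψ k)
    rw [h2] at h1
    exact (tendsto_const_nhds_iff.1 h1).symm
  have hzusum : ‖zl‖ + ‖ul‖ = 1 := by
    have h1 : Tendsto (fun k => ‖zh (ψ k)‖ + ‖uh (ψ k)‖) atTop (𝓝 (‖zl‖ + ‖ul‖)) :=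
      hzlim.norm.add hulim.norm
    have h2 : (fun k => ‖zh (ψ k)‖ + ‖uh (ψ k)‖) = fun _ => (1 : ℝ) :=
      funext fun k => hnormsum (ψ k)
    rw [h2] at h1
    exact (tendsto_const_nhds_iff.1 h1).symm
  -- the polynomial curve
  set φc : ℝ → (Fin m → ℝ) := fun t i => q i + ∑ jd : Fin D, A jd i * t ^ ((jd : ℕ) + 1)
    with hφc
  -- expansion in terms of Ak
  have hexp2 : ∀ k (c : ℝ) i, Y (x k + c • v k) i =
      Y (x k) i + ∑ jd : Fin D, Ak k jd i * c ^ ((jd : ℕ) + 1) := by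
    intro k c i
    have h1 : x k + c • v k = fun j => x k j + w k j * (c * s k) := by
      funext j
      simp only [hv, Pi.add_apply, Pi.smul_apply, smul_eq_mul]
      ring
    have h0 : Y (x k) i = Cf k 0 i := by
      have e0 : x k = fun j => x k j + w k j * (0:ℝ) := by funext j; simp
      conv_lhs => rw [e0]
      rw [hexp k 0 i, Finset.sum_eq_single 0]
      · norm_num
      · intro j _ hj0
        rw [zero_pow hj0]
        ring
      · intro h
        simp at h
    rw [h1, hexp k (c * s k) i, h0]
    rw [Finset.sum_range_succ']
    rw [pow_zero, mul_one, add_comm]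
    congr 1
    rw [← Fin.sum_univ_eq_sum_range (fun j => Cf k (j + 1) i * (c * s k) ^ (j + 1)) D]
    refine Finset.sum_congr rfl fun jd _ => ?_
    show Cf k ((jd:ℕ) + 1) i * (c * s k) ^ ((jd:ℕ) + 1) = Ak k jd i * c ^ ((jd:ℕ) + 1)
    simp only [hAk, Pi.smul_apply, smul_eq_mul]
    rw [mul_pow]
    ring
  -- pointwise limits
  have hY1 : ∀ c : ℝ, Tendsto (fun k => Y (x (ψ k) + c • v (ψ k))) atTop (𝓝 (φc c)) := by
    intro c
    rw [tendsto_pi_nhds]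
    intro i
    have h1 : ∀ k, Y (x (ψ k) + c • v (ψ k)) i =
        Y (x (ψ k)) i + ∑ jd : Fin D, Ak (ψ k) jd i * c ^ ((jd : ℕ) + 1) :=
      fun k => hexp2 (ψ k) c i
    simp only [h1, hφc]
    have hq1 : Tendsto (fun k => Y (x (ψ k)) i) atTop (𝓝 (q i)) := by
      have := (hxq.comp hψ.tendsto_atTop)
      exact (tendsto_pi_nhds.1 this) i
    refine hq1.add (tendsto_finset_sum _ fun jd _ => ?_)
    have hA1 : Tendsto (fun k => Ak (ψ k) jd i) atTop (𝓝 (A jd i)) :=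
      (tendsto_pi_nhds.1 ((tendsto_pi_nhds.1 hAlim) jd)) i
    exact hA1.mul_const _
  -- norm identity
  have hnormid : ∀ k (c : ℝ), ‖x k + c • v k‖ = N k * ‖zh k + c • uh k‖ := by
    intro k c
    have h1 : x k + c • v k = N k • (zh k + c • uh k) := by
      rw [hzh, huh, smul_add, smul_inv_smul₀ (hNpos k).ne', smul_comm (N k),
        smul_inv_smul₀ (hNpos k).ne']
    rw [h1, norm_smul, Real.norm_eq_abs, abs_of_pos (hNpos k)]
  -- good parameters
  have hgood : ∀ c : ℝ, zl + c • ul ≠ 0 → φc c ∈ nonProperSet Y := by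
    intro c hzc
    refine aux_mem_nonProperSet (fun k => x (ψ k) + c • v (ψ k)) ?_ (hY1 c)
    have h1 : Tendsto (fun k => N (ψ k)) atTop atTop := by
      refine tendsto_atTop_mono (fun k => ?_) (hxnorm.comp hψ.tendsto_atTop)
      exact le_add_of_nonneg_right (norm_nonneg _)
    have h2 : Tendsto (fun k => ‖zh (ψ k) + c • uh (ψ k)‖) atTop (𝓝 ‖zl + c • ul‖) :=
      (hzlim.add (hulim.const_smul c)).norm
    have h3 := h1.atTop_mul_pos (norm_pos_iff.2 hzc) h2
    refine h3.congr fun k => ?_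
    exact (hnormid (ψ k) c).symm
  have hφcont : Continuous φc := by
    refine continuous_pi fun i => ?_
    refine (continuous_const.add ?_)
    exact continuous_finset_sum _ fun jd _ =>
      (continuous_const.mul (continuous_pow _))
  refine ⟨φc, ?_, ?_, ?_, ?_⟩
  · -- polynomial witness
    refine ⟨fun i => Polynomial.C (q i) +
      ∑ jd : Fin D, Polynomial.monomial ((jd : ℕ) + 1) (A jd i), ?_⟩
    intro t i
    simp [hφc, Polynomial.eval_finset_sum]
  · -- nonconstant
    rintro ⟨c0, hc0⟩
    have hA0 : A ≠ 0 := by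
      intro h
      rw [h, norm_zero] at hAnorm
      norm_num at hAnorm
    have hex1 : ∃ jd, A jd ≠ 0 := by
      by_contra hcon
      push_neg at hcon
      exact hA0 (funext hcon)
    obtain ⟨jd, hjd⟩ := hex1
    have hex2 : ∃ i, A jd i ≠ 0 := by
      by_contra hcon
      push_neg at hcon
      exact hjd (funext hcon)
    obtain ⟨i, hi⟩ := hex2
    set p1 : Polynomial ℝ := Polynomial.C (q i) +
      ∑ jd' : Fin D, Polynomial.monomial ((jd' : ℕ) + 1) (A jd' i) with hp1
    have hev : ∀ t : ℝ, p1.eval t = (Polynomial.C (c0 i)).eval t := by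
      intro t
      have h1 := congrFun (hc0 t) i
      simp only [hφc] at h1
      simp only [hp1, Polynomial.eval_add, Polynomial.eval_C, Polynomial.eval_finset_sum,
        Polynomial.eval_monomial]
      rw [← h1]
    have hp := Polynomial.funext hev
    have hcoeff := congrArg (fun p => Polynomial.coeff p ((jd : ℕ) + 1)) hp
    simp only [hp1, Polynomial.coeff_add, Polynomial.coeff_C, Polynomial.finset_sum_coeff,
      Polynomial.coeff_monomial] at hcoeff
    rw [Finset.sum_eq_single jd] at hcoeff
    · simp at hcoeff
      exact hi hcoeff
    · intro jd' _ hne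
      rw [if_neg]
      intro hco
      exact hne (Fin.val_injective (by omega))
    · intro h
      simp at h
  · -- range ⊆ nonProperSet
    rintro _ ⟨c, rfl⟩
    by_cases hzc : zl + c • ul ≠ 0
    · exact hgood c hzc
    · push_neg at hzc
      have hune : ul ≠ 0 := by
        intro h0
        rw [h0, smul_zero, add_zero] at hzc
        rw [hzc, h0] at hzusum
        simp at hzusum
      have hseq : Tendsto (fun k : ℕ => c + 1 / (k + 1)) atTop (𝓝 c) := by
        have := tendsto_one_div_add_atTop_nhds_zero_nat (𝕜 := ℝ)
        simpa using (tendsto_const_nhds (x := c)).add this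
      refine (aux_isClosed hc).mem_of_tendsto ((hφcont.tendsto c).comp hseq) ?_
      refine Filter.Eventually.of_forall fun k => ?_
      simp only [Function.comp_apply]
      refine hgood (c + 1 / (k + 1)) ?_
      intro hbad
      have h1 : zl + (c + 1 / (k + 1)) • ul = (1 / (k + 1 : ℝ)) • ul := by
        rw [add_smul, ← add_assoc, hzc, zero_add]
      rw [h1] at hbad
      have hne : (1 / (k + 1 : ℝ)) ≠ 0 := by positivity
      exact hune ((smul_eq_zero.1 hbad).resolve_left hne)
  · -- q in range
    refine ⟨0, ?_⟩
    funext i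
    simp [hφc]
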